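/- Fix integers p ≥ 2 and 0 ≤ i ≤ ⌊(p−1)/2⌋. Let a₀, a₁, …, aₙ ∈ ℂ satisfy Σ'_μ a_μ^{p−i} · ā_μ^{i} = 0, where ā_μ is the complex conjugate of a_μ, and let f : ℂ → ℂ be any holomorphic (entire) function. Then u(x₀,…,xₙ) := f(a₀x₀ + Σ_{j=1}^{n} a_j x_j) is a solution of the (p,i)-submodel. -/

import Mathlib

/-- Iterated partial derivative `∂_μᵐ u (x)` of `u : ℝ^{1+n} → ℂ` in the coordinate `x_μ`. -/
noncomputable def ipd {n : ℕ} (μ : Fin (n + 1)) (m : ℕ)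
    (u : (Fin (n + 1) → ℝ) → ℂ) (x : Fin (n + 1) → ℝ) : ℂ :=
  iteratedDeriv m (fun t => u (Function.update x μ t)) (x μ)

/-- The Minkowski sum `Σ'_μ A_μ = A₀ − Σ_{j=1}^{n} A_j`. -/
noncomputable def minkSum {n : ℕ} (A : Fin (n + 1) → ℂ) : ℂ := A 0 - ∑ j : Fin n, A j.succ

/-- `u : ℝ^{1+n} → ℂ` solves the `(p,i)`-submodel:
`Σ'_μ ∂_μ^{p−i}(uᵏ)·∂_μ^{i}(ūˡ) = 0` for all `k = 1,…,p−i` and `l = 0,…,i`. -/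
def SolvesSubmodel {n : ℕ} (p i : ℕ) (u : (Fin (n + 1) → ℝ) → ℂ) : Prop :=
  ∀ k ∈ Finset.Icc 1 (p - i), ∀ l ∈ Finset.Icc 0 i, ∀ x,
    minkSum (fun μ => ipd μ (p - i) (fun y => u y ^ k) x *
      ipd μ i (fun y => (starRingEnd ℂ) (u y) ^ l) x) = 0

/-- An entire function is `C^∞` over `ℂ`. -/
private lemma entire_smooth {g : ℂ → ℂ} (hg : Differentiable ℂ g) : ContDiff ℂ (⊤ : ℕ∞) g :=
  contDiff_iff_contDiffAt.2 fun z => (hg.analyticAt z).contDiffAt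

/-- The derivative of an entire function is entire. -/
private lemma entire_deriv {g : ℂ → ℂ} (hg : Differentiable ℂ g) : Differentiable ℂ (deriv g) :=
  (contDiff_infty_iff_deriv.1 (entire_smooth hg)).2.differentiable (by simp)

/-- Iterated derivatives commute with multiplication by a constant. -/
private lemma iterDeriv_cmul {m : ℕ} (c : ℂ) {g : ℂ → ℂ} (hg : Differentiable ℂ g) (z : ℂ) :
    iteratedDeriv m (fun w => c * g w) z = c * iteratedDeriv m g z := by
  simp only [← iteratedDerivWithin_univ]
  exact iteratedDerivWithin_const_mul (Set.mem_univ z) uniqueDiffOn_univ c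
    ((entire_smooth hg).of_le (by exact_mod_cast le_top)).contDiffWithinAt

/-- Chain rule for an entire function restricted to a real line. -/
private lemma hasDerivAt_line {g : ℂ → ℂ} (hg : Differentiable ℂ g) (c b : ℂ) (t : ℝ) :
    HasDerivAt (fun s : ℝ => g (c + b * s)) (b * deriv g (c + b * t)) t := by
  have h1 : HasDerivAt (fun s : ℝ => c + b * (s : ℂ)) b t := by
    simpa using (Complex.ofRealCLM.hasDerivAt (x := t)).const_mul b |>.const_add c
  have := ((hg (c + b * t)).hasDerivAt).comp t h1
  simpa [Function.comp_def, mul_comm] using this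

/-- Iterated chain rule for an entire function restricted to a real line. -/
private lemma iter_line {g : ℂ → ℂ} (hg : Differentiable ℂ g) (c b : ℂ) (m : ℕ) (t : ℝ) :
    iteratedDeriv m (fun s : ℝ => g (c + b * s)) t = b ^ m * iteratedDeriv m g (c + b * t) := by
  induction m generalizing g with
  | zero => simp
  | succ m ih =>
    have hd : Differentiable ℂ (deriv g) := entire_deriv hg
    rw [iteratedDeriv_succ', iteratedDeriv_succ']
    have key : (deriv fun s : ℝ => g (c + b * s))
        = fun s : ℝ => (fun z => b * deriv g z) (c + b * s) := by
      funext s; exact (hasDerivAt_line hg c b s).deriv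
    rw [key, ih (hd.const_mul b), iterDeriv_cmul b hd]
    ring

/-- Iterated chain rule for the conjugate of an entire function restricted to a real line. -/
private lemma iter_line_conj {g : ℂ → ℂ} (hg : Differentiable ℂ g) (c b : ℂ) (m : ℕ) (t : ℝ) :
    iteratedDeriv m (fun s : ℝ => (starRingEnd ℂ) (g (c + b * s))) t
      = (starRingEnd ℂ) (b ^ m * iteratedDeriv m g (c + b * t)) := by
  induction m generalizing g with
  | zero => simp
  | succ m ih =>
    have hd : Differentiable ℂ (deriv g) := entire_deriv hg
    rw [iteratedDeriv_succ', iteratedDeriv_succ']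
    have key : (deriv fun s : ℝ => (starRingEnd ℂ) (g (c + b * s)))
        = fun s : ℝ => (starRingEnd ℂ) ((fun z => b * deriv g z) (c + b * s)) := by
      funext s
      have h := Complex.conjCLE.hasFDerivAt.comp_hasDerivAt s (hasDerivAt_line hg c b s)
      simpa [Function.comp_def] using h.deriv
    rw [key, ih (hd.const_mul b), iterDeriv_cmul b hd]
    congr 1; ring

/-- Exact solutions: if `a₀,…,aₙ ∈ ℂ` satisfy `Σ'_μ a_μ^{p−i}·ā_μ^{i} = 0` and
`f : ℂ → ℂ` is entire, then `u(x) = f(Σ_μ a_μ x_μ)` solves the `(p,i)`-submodel. -/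
theorem submodel_holomorphic_of_linear_solution {n : ℕ} (p i : ℕ)
    (hp : 2 ≤ p) (hi : i ≤ (p - 1) / 2) (a : Fin (n + 1) → ℂ)
    (ha : minkSum (fun μ => a μ ^ (p - i) * (starRingEnd ℂ) (a μ) ^ i) = 0)
    (f : ℂ → ℂ) (hf : Differentiable ℂ f) :
    SolvesSubmodel p i (fun x => f (∑ μ, a μ * (x μ : ℂ))) := by
  intro k hk l hl x
  set S : ℂ := ∑ ν, a ν * (x ν : ℂ) with hS_def
  set c : Fin (n + 1) → ℂ := fun μ => ∑ ν ∈ Finset.univ.erase μ, a ν * (x ν : ℂ) with hc_def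
  have hupd : ∀ (μ : Fin (n + 1)) (t : ℝ),
      (∑ ν, a ν * ((Function.update x μ t ν : ℝ) : ℂ)) = c μ + a μ * (t : ℂ) := by
    intro μ t
    rw [← Finset.add_sum_erase Finset.univ _ (Finset.mem_univ μ), add_comm]
    congr 1
    · exact Finset.sum_congr rfl fun ν hν => by
        rw [Function.update_of_ne (Finset.mem_erase.1 hν).1]
    · rw [Function.update_self]
  have hS : ∀ μ : Fin (n + 1), c μ + a μ * ((x μ : ℝ) : ℂ) = S := by
    intro μ
    rw [← hupd μ (x μ), hS_def]
    congr 1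
    funext ν
    rw [Function.update_eq_self]
  have h1 : ∀ μ : Fin (n + 1),
      ipd μ (p - i) (fun y => f (∑ ν, a ν * (y ν : ℂ)) ^ k) x
        = a μ ^ (p - i) * iteratedDeriv (p - i) (fun z => f z ^ k) S := by
    intro μ
    unfold ipd
    rw [show (fun t : ℝ => f (∑ ν, a ν * ((Function.update x μ t ν : ℝ) : ℂ)) ^ k)
        = (fun t : ℝ => (fun z => f z ^ k) (c μ + a μ * t)) from
      funext fun t => by rw [hupd μ t]]
    rw [iter_line (g := fun z => f z ^ k) (hf.pow k) (c μ) (a μ) (p - i) (x μ), hS μ]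
  have h2 : ∀ μ : Fin (n + 1),
      ipd μ i (fun y => (starRingEnd ℂ) (f (∑ ν, a ν * (y ν : ℂ))) ^ l) x
        = (starRingEnd ℂ) (a μ ^ i * iteratedDeriv i (fun z => f z ^ l) S) := by
    intro μ
    unfold ipd
    rw [show (fun t : ℝ => (starRingEnd ℂ) (f (∑ ν, a ν * ((Function.update x μ t ν : ℝ) : ℂ))) ^ l)
        = (fun t : ℝ => (starRingEnd ℂ) ((fun z => f z ^ l) (c μ + a μ * t))) from
      funext fun t => by rw [hupd μ t, map_pow]]
    rw [iter_line_conj (g := fun z => f z ^ l) (hf.pow l) (c μ) (a μ) i (x μ), hS μ]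
  set D : ℂ := iteratedDeriv (p - i) (fun z => f z ^ k) S *
    (starRingEnd ℂ) (iteratedDeriv i (fun z => f z ^ l) S) with hD
  have hfun : (fun μ : Fin (n + 1) =>
      ipd μ (p - i) (fun y => f (∑ ν, a ν * (y ν : ℂ)) ^ k) x *
        ipd μ i (fun y => (starRingEnd ℂ) (f (∑ ν, a ν * (y ν : ℂ))) ^ l) x)
      = fun μ => (a μ ^ (p - i) * (starRingEnd ℂ) (a μ) ^ i) * D := by
    funext μ
    rw [h1 μ, h2 μ, hD, map_mul, map_pow]
    ring
  show minkSum _ = 0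
  rw [hfun]
  have : minkSum (fun μ => (a μ ^ (p - i) * (starRingEnd ℂ) (a μ) ^ i) * D)
      = minkSum (fun μ => a μ ^ (p - i) * (starRingEnd ℂ) (a μ) ^ i) * D := by
    simp [minkSum, Finset.sum_mul, sub_mul]
  rw [this, ha, zero_mul]
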